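/- Let S be a cofibrantly generated model category and (C, D) a pair of small categories. If η : X → Y is a D-weak equivalence in S^C and both X and Y satisfy D-codescent, then η is a C-weak equivalence. -/

import Mathlib

/-! Preliminaries: basic notions of homotopical algebra (lifting properties,
model structures, transfinite compositions, relative cell complexes, smallness,
cofibrant generation) and the relative model structure `U_S(C,D)` on functor
categories, following Balmer–Matthey, "Codescent theory I". -/

universe w v u u₂ u₃

open CategoryTheory Limits

namespace Codescent

set_option linter.dupNamespace false

section Lifting

variable {M : Type u} [Category.{v} M]

/-- The class of morphisms having the left lifting property with respect to all
morphisms in `K`. -/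
def llp (K : MorphismProperty M) : MorphismProperty M :=
  fun _ _ f => ∀ ⦃X Y : M⦄ (g : X ⟶ Y), K g → HasLiftingProperty f g

/-- The class of morphisms having the right lifting property with respect to all
morphisms in `K`. -/
def rlp (K : MorphismProperty M) : MorphismProperty M :=
  fun _ _ g => ∀ ⦃A B : M⦄ (f : A ⟶ B), K f → HasLiftingProperty f g

/-- Intersection of two classes of morphisms. -/
def inter (P Q : MorphismProperty M) : MorphismProperty M :=
  fun _ _ f => P f ∧ Q f

/-- `f` is a retract of `g` (as objects of the arrow category). -/
def RetractHom {X Y X' Y' : M} (f : X ⟶ Y) (g : X' ⟶ Y') : Prop :=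
  ∃ (i : Arrow.mk f ⟶ Arrow.mk g) (r : Arrow.mk g ⟶ Arrow.mk f), i ≫ r = 𝟙 (Arrow.mk f)

/-- The object `c` is a retract of the object `d`. -/
def IsRetractObj (c d : M) : Prop :=
  ∃ (i : c ⟶ d) (r : d ⟶ c), i ≫ r = 𝟙 c

/-- A functorial factorization of every morphism as a morphism in `L` followed by
a morphism in `R`. -/
structure FunctorialFact (L R : MorphismProperty M) where
  Z : Arrow M ⥤ M
  ι : (Arrow.leftFunc : Arrow M ⥤ M) ⟶ Z
  π : Z ⟶ (Arrow.rightFunc : Arrow M ⥤ M)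
  fac : ∀ f : Arrow M, ι.app f ≫ π.app f = f.hom
  mem_left : ∀ f : Arrow M, L (ι.app f)
  mem_right : ∀ f : Arrow M, R (π.app f)

end Lifting

/-- A (Quillen) model structure on a category `M`: classes of weak equivalences,
cofibrations and fibrations satisfying MC2–MC5 (MC1, completeness and
cocompleteness, is imposed separately as `HasLimits`/`HasColimits`). -/
structure ModelStructure (M : Type u) [Category.{v} M] where
  weq : MorphismProperty M
  cof : MorphismProperty M
  fib : MorphismProperty M
  /-- MC2, two-out-of-three -/
  weq_comp : ∀ {X Y Z : M} (f : X ⟶ Y) (g : Y ⟶ Z), weq f → weq g → weq (f ≫ g)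
  weq_cancel_left : ∀ {X Y Z : M} (f : X ⟶ Y) (g : Y ⟶ Z), weq f → weq (f ≫ g) → weq g
  weq_cancel_right : ∀ {X Y Z : M} (f : X ⟶ Y) (g : Y ⟶ Z), weq g → weq (f ≫ g) → weq f
  /-- MC3, closure under retracts -/
  weq_retract : ∀ {X Y X' Y' : M} (f : X ⟶ Y) (g : X' ⟶ Y'), RetractHom f g → weq g → weq f
  cof_retract : ∀ {X Y X' Y' : M} (f : X ⟶ Y) (g : X' ⟶ Y'), RetractHom f g → cof g → cof f
  fib_retract : ∀ {X Y X' Y' : M} (f : X ⟶ Y) (g : X' ⟶ Y'), RetractHom f g → fib g → fib f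
  /-- MC4, lifting -/
  cof_lift : ∀ {A B X Y : M} (f : A ⟶ B) (g : X ⟶ Y),
    cof f → weq g → fib g → HasLiftingProperty f g
  fib_lift : ∀ {A B X Y : M} (f : A ⟶ B) (g : X ⟶ Y),
    weq f → cof f → fib g → HasLiftingProperty f g
  /-- MC5, functorial factorizations -/
  fact₁ : FunctorialFact (M := M) cof (inter weq fib)
  fact₂ : FunctorialFact (M := M) (inter weq cof) fib

section Transfinite

/-- A well-ordered type (with bottom element and successors), the index for
transfinite compositions (a "λ-sequence" index). -/
structure WOType : Type (w + 1) where
  carrier : Type w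
  [lin : LinearOrder carrier]
  [succ : SuccOrder carrier]
  [bot : OrderBot carrier]
  [wf : WellFoundedLT carrier]

attribute [instance] WOType.lin WOType.succ WOType.bot WOType.wf

variable {M : Type u} [Category.{v} M] {N : Type u₂} [Category.{v} N]

/-- The class of pushouts of morphisms of `K`. -/
def pushoutsOf (K : MorphismProperty M) : MorphismProperty M :=
  fun X Y f => ∃ (A B : M) (g : A ⟶ B) (t : A ⟶ X) (b : B ⟶ Y), K g ∧ IsPushout g t b f

/-- The inclusion functor of `{i // i < j}` into a preorder `J`. -/
def iioIncl {J : Type w} [Preorder J] (j : J) : {i : J // i < j} ⥤ J where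
  obj i := i.1
  map {i i'} h := homOfLE (Subtype.coe_le_coe.mpr (leOfHom h))

/-- The cocone on the restriction of `F : J ⥤ M` to `{i // i < j}` with apex `F.obj j`. -/
def iioCocone {J : Type w} [Preorder J] (F : J ⥤ M) (j : J) : Cocone (iioIncl j ⋙ F) where
  pt := F.obj j
  ι :=
    { app := fun i => F.map (homOfLE i.2.le)
      naturality := fun i i' h => by
        dsimp
        rw [Category.comp_id, ← F.map_comp]
        rfl }

/-- `F : J ⥤ M` is a (continuous) transfinite sequence all of whose successor
maps lie in the class `P`. -/
structure IsChainOf (P : MorphismProperty M) {J : Type w} [LinearOrder J] [SuccOrder J]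
    (F : J ⥤ M) : Prop where
  succ_mem : ∀ j : J, ¬ IsMax j → P (F.map (homOfLE (Order.le_succ j)))
  limit_isColimit : ∀ j : J, Order.IsSuccLimit j → Nonempty (IsColimit (iioCocone F j))

/-- The class of relative `K`-cells: transfinite compositions of pushouts of
morphisms of `K`. -/
def cell (K : MorphismProperty M) : MorphismProperty M :=
  fun X Y f => ∃ (J : WOType.{v}) (F : J.carrier ⥤ M)
    (_ : IsChainOf (pushoutsOf K) F) (c : Cocone F) (_ : IsColimit c)
    (e : X ≅ F.obj ⊥) (e' : c.pt ≅ Y), f = e.hom ≫ c.ι.app ⊥ ≫ e'.hom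

/-- A linear order is `κ`-filtered when it has no top element and every subset of
cardinality at most `κ` is bounded above. -/
def KFiltered (κ : Cardinal.{w}) (J : Type w) [LinearOrder J] : Prop :=
  (∀ j : J, ∃ j' : J, j < j') ∧
    ∀ s : Set J, Cardinal.mk s ≤ κ → ∃ j : J, ∀ i ∈ s, i ≤ j

/-- The object `d` is small relative to the class `K`: for some cardinal `κ`,
morphisms from `d` into the colimit of any `κ`-filtered well-ordered continuous
sequence with successor maps in `K` factor, essentially uniquely, through some
stage of the sequence. -/
def IsSmallRel (d : M) (K : MorphismProperty M) : Prop :=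
  ∃ κ : Cardinal.{v}, ∀ (J : WOType.{v}), KFiltered κ J.carrier →
    ∀ (F : J.carrier ⥤ M), IsChainOf K F →
    ∀ (c : Cocone F), IsColimit c →
      (∀ g : d ⟶ c.pt, ∃ (j : J.carrier) (h : d ⟶ F.obj j), h ≫ c.ι.app j = g) ∧
      (∀ (j j' : J.carrier) (h : d ⟶ F.obj j) (h' : d ⟶ F.obj j'),
        h ≫ c.ι.app j = h' ≫ c.ι.app j' →
          ∃ (k : J.carrier) (l : j ≤ k) (l' : j' ≤ k),
            h ≫ F.map (homOfLE l) = h' ≫ F.map (homOfLE l'))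

/-- The model structure `P` is cofibrantly generated, with set of generating
cofibrations `I` and set of generating trivial cofibrations `J`. -/
structure IsCofGen (P : ModelStructure M) (I J : MorphismProperty M) : Prop where
  small_I : ∀ ⦃X Y : M⦄ (f : X ⟶ Y), I f → IsSmallRel X (cell I)
  small_J : ∀ ⦃X Y : M⦄ (f : X ⟶ Y), J f → IsSmallRel X (cell J)
  fib_eq : P.fib = rlp J
  trivFib_eq : inter P.weq P.fib = rlp I

/-- A functor preserves pushouts. -/
def PreservesPushouts (G : M ⥤ N) : Prop :=
  ∀ ⦃Z X Y P : M⦄ (f : Z ⟶ X) (g : Z ⟶ Y) (inl : X ⟶ P) (inr : Y ⟶ P),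
    IsPushout f g inl inr → IsPushout (G.map f) (G.map g) (G.map inl) (G.map inr)

/-- A functor preserves transfinite compositions: it preserves colimits of
diagrams indexed by well-ordered types. -/
def PreservesTransfiniteCompositions (G : M ⥤ N) : Prop :=
  ∀ (J : Type v) [LinearOrder J] [WellFoundedLT J] (F : J ⥤ M) (c : Cocone F),
    IsColimit c → Nonempty (IsColimit (G.mapCocone c))

/-- The image `{G(f) | f ∈ K}` of a class of morphisms under a functor. -/
def strictImage (G : M ⥤ N) (K : MorphismProperty M) : MorphismProperty N :=
  fun _ _ g => ∃ (A B : M) (f : A ⟶ B), K f ∧ Arrow.mk (G.map f) = Arrow.mk g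

end Transfinite

section CofRep

variable {M : Type u} [Category.{v} M]

/-- The cofibrant replacement of `X` given by the functorial factorization of
`∅ ⟶ X`. -/
noncomputable def cofRep (P : ModelStructure M) [HasInitial M] (X : M) : M :=
  P.fact₁.Z.obj (Arrow.mk (initial.to X))

/-- The canonical trivial fibration `QX ⟶ X` from the cofibrant replacement. -/
noncomputable def cofRepHom (P : ModelStructure M) [HasInitial M] (X : M) :
    cofRep P X ⟶ X :=
  P.fact₁.π.app (Arrow.mk (initial.to X))

/-- The functor `X ↦ (∅ ⟶ X)` to the arrow category. -/
noncomputable def toArrowInit (M : Type u) [Category.{v} M] [HasInitial M] : M ⥤ Arrow M where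
  obj X := Arrow.mk (initial.to X)
  map {X Y} f := Arrow.homMk (u := 𝟙 _) (v := f) (by apply initial.hom_ext)

/-- The cofibrant replacement functor of the model structure `P`. -/
noncomputable def qFunctor (P : ModelStructure M) [HasInitial M] : M ⥤ M :=
  toArrowInit M ⋙ P.fact₁.Z

end CofRep

section FunctorCat

variable {S : Type u} [Category.{v} S]

/-- The class of morphisms in `S^C` that belong objectwise on `D` to the class `P`;
for `P` the weak equivalences (resp. fibrations) of a model structure these are
the `D`-weak equivalences (resp. the `D`-fibrations). -/
def objProp {C : Type v} [SmallCategory C] (P : MorphismProperty S) (D : Set C) :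
    MorphismProperty (C ⥤ S) :=
  fun _ _ η => ∀ d ∈ D, P (η.app d)

/-- Trivial `D`-fibrations in `S^C`. -/
def dTrivFib {C : Type v} [SmallCategory C] (P : ModelStructure S) (D : Set C) :
    MorphismProperty (C ⥤ S) :=
  inter (objProp P.weq D) (objProp P.fib D)

/-- `D`-cofibrations in `S^C`: the morphisms having the left lifting property with
respect to all trivial `D`-fibrations. -/
def dCof {C : Type v} [SmallCategory C] (P : ModelStructure S) (D : Set C) :
    MorphismProperty (C ⥤ S) :=
  llp (dTrivFib P D)

variable [HasColimits S]

/-- `D`-cofibrant objects of `S^C`. -/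
def dCofibrant {C : Type v} [SmallCategory C] (P : ModelStructure S) (D : Set C)
    (X : C ⥤ S) : Prop :=
  dCof P D (initial.to X)

/-- The model structure `U_S(C,D)` on `S^C`: a model structure whose weak
equivalences are the `D`-weak equivalences, whose fibrations are the
`D`-fibrations and whose cofibrations are the `D`-cofibrations. -/
structure RelStructure (P : ModelStructure S) (C : Type v) [SmallCategory C] (D : Set C) where
  N : ModelStructure (C ⥤ S)
  weq_eq : N.weq = objProp P.weq D
  fib_eq : N.fib = objProp P.fib D
  cof_eq : N.cof = dCof P D

/-- `X` satisfies `D`-codescent at `c`: the cofibrant replacement morphism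
`Q_{C,D} X ⟶ X` in `U_S(C,D)` is a weak equivalence at `c`. -/
def CodescentAt {C : Type v} [SmallCategory C] (P : ModelStructure S) {D : Set C}
    (U : RelStructure P C D) (X : C ⥤ S) (c : C) : Prop :=
  P.weq ((cofRepHom U.N X).app c)

/-- `X` satisfies `D`-codescent: the cofibrant replacement morphism
`Q_{C,D} X ⟶ X` is a `C`-weak equivalence. -/
def Codescent {C : Type v} [SmallCategory C] (P : ModelStructure S) {D : Set C}
    (U : RelStructure P C D) (X : C ⥤ S) : Prop :=
  ∀ c : C, CodescentAt P U X c

/-- The coproduct property for weak equivalences. -/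
def CoproductProperty (P : ModelStructure S) : Prop :=
  ∀ (ι : Type v) (X Y : ι → S) (f : ∀ i, X i ⟶ Y i),
    (∀ i, P.weq (f i)) ↔ P.weq (Limits.Sigma.map f)

end FunctorCat

section Pairs

variable {A : Type v} [SmallCategory A] {C : Type v} [SmallCategory C]

/-- Two subsets of objects are retract equivalent. -/
def RetractEquiv (D D' : Set C) : Prop :=
  (∀ d ∈ D, ∃ d' ∈ D', IsRetractObj d d') ∧ (∀ d' ∈ D', ∃ d ∈ D, IsRetractObj d' d)

/-- `Φ : (A,B) ⟶ (C,D)` is left glossy. -/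
def LeftGlossy (Φ : A ⥤ C) (B : Set A) : Prop :=
  ∀ b ∈ B, ∃ (ι : Type v) (tgt : ι → A) (β : ∀ i, Φ.obj b ⟶ Φ.obj (tgt i)),
    (∀ i, tgt i ∈ B) ∧
      ∀ (a : A) (α : Φ.obj b ⟶ Φ.obj a),
        ∃! p : (i : ι) × (tgt i ⟶ a), β p.1 ≫ Φ.map p.2 = α

/-- `Φ : (A,B) ⟶ (C,D)` is right glossy. -/
def RightGlossy (Φ : A ⥤ C) (B : Set A) : Prop :=
  ∀ b ∈ B, ∃ (ι : Type v) (src : ι → A) (β : ∀ j, Φ.obj (src j) ⟶ Φ.obj b),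
    (∀ j, src j ∈ B) ∧
      ∀ (a : A) (α : Φ.obj a ⟶ Φ.obj b),
        ∃! p : (j : ι) × (a ⟶ src j), Φ.map p.2 ≫ β p.1 = α

/-- A subset of objects is left absorbant: the source of any morphism whose
target lies in the subset also lies in the subset. -/
def LeftAbsorbant (D : Set C) : Prop :=
  ∀ ⦃c c' : C⦄, (c ⟶ c') → c' ∈ D → c ∈ D

end Pairs

end Codescent

namespace Codescent

section Aux

variable {S : Type u} [Category.{v} S]

/-- Pointwise form of an equality of morphism properties. -/
lemma MP_eq_iff {M : Type u₂} [Category.{v} M] {P Q : MorphismProperty M} (h : P = Q)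
    {X Y : M} (f : X ⟶ Y) : P f ↔ Q f := by subst h; rfl

/-- The identity is a weak equivalence. -/
lemma weq_id (P : ModelStructure S) (X : S) : P.weq (𝟙 X) := by
  set f := Arrow.mk (𝟙 X)
  have fac := P.fact₂.fac f
  have hj := (P.fact₂.mem_left f).1
  refine P.weq_retract (𝟙 X) (P.fact₂.ι.app f) ?_ hj
  refine ⟨Arrow.homMk (u := 𝟙 X) (v := P.fact₂.ι.app f) (by rfl),
    Arrow.homMk (u := 𝟙 X) (v := P.fact₂.π.app f) (by exact (Category.id_comp _).trans fac.symm), ?_⟩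
  ext
  · exact Category.comp_id _
  · exact fac

lemma pi_map_π {ι : Type v} [HasLimits S] {X Y : ι → S} (g : ∀ i, X i ⟶ Y i) (i : ι) :
    Limits.Pi.map g ≫ Pi.π Y i = Pi.π X i ≫ g i := by simp

/-- A product of maps with right lifting property has the right lifting property. -/
lemma rlp_pi [HasLimits S] {K : MorphismProperty S} {ι : Type v} {X Y : ι → S}
    (g : ∀ i, X i ⟶ Y i) (h : ∀ i, rlp K (g i)) : rlp K (Limits.Pi.map g) := by
  intro A B f hf
  constructor
  intro u v sq
  have lifts : ∀ i, ∃ l : B ⟶ X i, f ≫ l = u ≫ Pi.π X i ∧ l ≫ g i = v ≫ Pi.π Y i := by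
    intro i
    haveI := h i f hf
    have sqi : CommSq (u ≫ Pi.π X i) f (g i) (v ≫ Pi.π Y i) := by
      constructor
      rw [Category.assoc, ← pi_map_π g i, ← Category.assoc, sq.w, Category.assoc]
    exact ⟨sqi.lift, sqi.fac_left, sqi.fac_right⟩
  choose l hl1 hl2 using lifts
  exact ⟨⟨⟨Pi.lift l, by apply Limits.Pi.hom_ext; simp [hl1],
    by apply Limits.Pi.hom_ext; simp [hl2]⟩⟩⟩

variable [HasLimits S] {C : Type v} [SmallCategory C]

/-- The right adjoint to evaluation at `c`, on objects. -/
@[simps]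
noncomputable abbrev Rfun (c : C) (Xo : S) : C ⥤ S where
  obj c' := ∏ᶜ fun (_ : c' ⟶ c) => Xo
  map {c' c''} h := Pi.lift fun f => Pi.π (fun (_ : c' ⟶ c) => Xo) (h ≫ f)
  map_id c' := by apply Limits.Pi.hom_ext; simp
  map_comp h h' := by apply Limits.Pi.hom_ext; simp

/-- The right adjoint to evaluation at `c`, on morphisms. -/
noncomputable def Rmap (c : C) {Xo Yo : S} (g : Xo ⟶ Yo) : Rfun c Xo ⟶ Rfun c Yo where
  app c' := Limits.Pi.map fun _ => g
  naturality c' c'' h := by apply Limits.Pi.hom_ext; simp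

/-- Transpose of a morphism `A.obj c ⟶ Xo` across the evaluation adjunction. -/
noncomputable def transpose (c : C) {A : C ⥤ S} {Xo : S} (u : A.obj c ⟶ Xo) :
    A ⟶ Rfun c Xo where
  app c' := Pi.lift fun f => A.map f ≫ u
  naturality c' c'' h := by apply Limits.Pi.hom_ext; simp

/-- A trivial `D`-cofibration is an objectwise weak equivalence at every object of `C`. -/
lemma trivCof_app_weq [HasColimits S] (P : ModelStructure S)
    {I J : MorphismProperty S} (hcg : IsCofGen P I J)
    {D : Set C} (U : RelStructure P C D)
    {A B : C ⥤ S} (i : A ⟶ B) (hw : U.N.weq i) (hc : U.N.cof i) (c : C) :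
    P.weq (i.app c) := by
  -- Step 1: `i.app c` has the left lifting property with respect to all fibrations of `S`.
  have hlift : ∀ {Xo Yo : S} (g : Xo ⟶ Yo), P.fib g → HasLiftingProperty (i.app c) g := by
    intro Xo Yo g hg
    have hRfib : U.N.fib (Rmap c g) := by
      refine (MP_eq_iff U.fib_eq _).mpr ?_
      intro d _
      have : rlp J (Limits.Pi.map fun (_ : d ⟶ c) => g) :=
        rlp_pi _ (fun _ => hcg.fib_eq ▸ hg)
      exact hcg.fib_eq ▸ this
    haveI hL := U.N.fib_lift i (Rmap c g) hw hc hRfib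
    constructor
    intro u v sq
    have sq' : CommSq (transpose c u) i (Rmap c g) (transpose c v) := by
      constructor
      ext c' f
      have hrhs : i.app c' ≫ B.map f ≫ v = A.map f ≫ u ≫ g := by
        rw [← Category.assoc, ← i.naturality, Category.assoc, ← sq.w]
      simp only [NatTrans.comp_app, transpose, Rmap, Category.assoc, pi_map_π,
        limit.lift_π_assoc, limit.lift_π, Fan.mk_pt, Fan.mk_π_app]
      exact hrhs.symm
    refine ⟨⟨⟨sq'.lift.app c ≫ Pi.π _ (𝟙 c), ?_, ?_⟩⟩⟩
    · rw [← Category.assoc, ← NatTrans.comp_app, sq'.fac_left]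
      simp [transpose]
    · rw [Category.assoc, show Pi.π (fun (_ : c ⟶ c) => Xo) (𝟙 c) ≫ g
          = (Rmap c g).app c ≫ Pi.π (fun (_ : c ⟶ c) => Yo) (𝟙 c) from by simp [Rmap],
        ← Category.assoc, ← NatTrans.comp_app, sq'.fac_right]
      simp [transpose]
  -- Step 2: retract argument.
  set f := Arrow.mk (i.app c)
  have fac := P.fact₂.fac f
  have hj := P.fact₂.mem_left f
  have hq := P.fact₂.mem_right f
  haveI := hlift (P.fact₂.π.app f) hq
  have sq : CommSq (P.fact₂.ι.app f) (i.app c) (P.fact₂.π.app f) (𝟙 _) := by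
    constructor
    exact fac.trans (Category.comp_id _).symm
  haveI : sq.HasLift := this.sq_hasLift sq
  refine P.weq_retract (i.app c) (P.fact₂.ι.app f) ?_ hj.1
  refine ⟨Arrow.homMk (u := 𝟙 _) (v := sq.lift) (by exact (Category.id_comp _).trans sq.fac_left.symm),
    Arrow.homMk (u := 𝟙 _) (v := P.fact₂.π.app f) (by exact (Category.id_comp _).trans fac.symm), ?_⟩
  ext
  · exact Category.comp_id _
  · exact sq.fac_right

/-- `llp` is stable under passing to the first coproduct inclusion. -/
lemma llp_coprod_inl [HasColimits S] {K : MorphismProperty (C ⥤ S)} (A B : C ⥤ S)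
    (hB : llp K (initial.to B)) : llp K (coprod.inl : A ⟶ A ⨿ B) := by
  intro W V g hg
  haveI := hB g hg
  constructor
  intro t b sqtb
  have sq2 : CommSq (initial.to W) (initial.to B) g (coprod.inr ≫ b) :=
    ⟨initial.hom_ext _ _⟩
  refine ⟨⟨⟨coprod.desc t sq2.lift, by simp [coprod.inl_desc], ?_⟩⟩⟩
  apply coprod.hom_ext
  · simpa [coprod.inl_desc, coprod.inr_desc] using sqtb.w
  · simpa [coprod.inl_desc, coprod.inr_desc] using sq2.fac_right

/-- `llp` is stable under passing to the second coproduct inclusion. -/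
lemma llp_coprod_inr [HasColimits S] {K : MorphismProperty (C ⥤ S)} (A B : C ⥤ S)
    (hA : llp K (initial.to A)) : llp K (coprod.inr : B ⟶ A ⨿ B) := by
  intro W V g hg
  haveI := hA g hg
  constructor
  intro t b sqtb
  have sq2 : CommSq (initial.to W) (initial.to A) g (coprod.inl ≫ b) :=
    ⟨initial.hom_ext _ _⟩
  refine ⟨⟨⟨coprod.desc sq2.lift t, by simp [coprod.inr_desc], ?_⟩⟩⟩
  apply coprod.hom_ext
  · simpa [coprod.inl_desc, coprod.inr_desc] using sq2.fac_right
  · simpa [coprod.inl_desc, coprod.inr_desc] using sqtb.w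

/-- `llp` is closed under composition. -/
lemma llp_comp {K : MorphismProperty (C ⥤ S)} {A B E : C ⥤ S} {f : A ⟶ B} {g : B ⟶ E}
    (hf : llp K f) (hg : llp K g) : llp K (f ≫ g) := by
  intro X Y p hp
  haveI := hf p hp
  haveI := hg p hp
  infer_instance

end Aux

end Codescent

open Codescent

/-- rigidity of codescending objects (Balmer–Matthey, Cor. 5.3). -/
theorem statement_6 {S : Type u} [Category.{v} S] [HasLimits S] [HasColimits S]
    (P : ModelStructure S) (I J : MorphismProperty S) (hcg : IsCofGen P I J)
    {C : Type v} [SmallCategory C] (D : Set C) (U : RelStructure P C D)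
    {X Y : C ⥤ S} (η : X ⟶ Y) (hη : objProp P.weq D η)
    (hX : Codescent P U X) (hY : Codescent P U Y) :
    objProp P.weq Set.univ η := by
  intro c _
  -- The cofibrant replacement of `η` in `U_S(C,D)` and the naturality square.
  let Qη : cofRep U.N X ⟶ cofRep U.N Y :=
    U.N.fact₁.Z.map ((toArrowInit (C ⥤ S)).map η)
  have hnat : Qη ≫ cofRepHom U.N Y = cofRepHom U.N X ≫ η := by
    have h := U.N.fact₁.π.naturality ((toArrowInit (C ⥤ S)).map η)
    exact h
  have hξX := U.N.fact₁.mem_right (Arrow.mk (initial.to X))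
  have hξY := U.N.fact₁.mem_right (Arrow.mk (initial.to Y))
  have hηw : U.N.weq η := (MP_eq_iff U.weq_eq _).mpr hη
  -- `Qη` is a `D`-weak equivalence.
  have hQη : U.N.weq Qη := by
    apply U.N.weq_cancel_right Qη (cofRepHom U.N Y) hξY.1
    rw [hnat]
    exact U.N.weq_comp _ _ hξX.1 hηw
  -- `QX` and `QY` are `D`-cofibrant.
  have hQXcof : llp (dTrivFib P D) (initial.to (cofRep U.N X)) := by
    have h := (MP_eq_iff U.cof_eq _).mp (U.N.fact₁.mem_left (Arrow.mk (initial.to X)))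
    have e : initial.to (cofRep U.N X) = U.N.fact₁.ι.app (Arrow.mk (initial.to X)) :=
      initial.hom_ext _ _
    exact Eq.mpr (congrArg (fun f => llp (dTrivFib P D) f) e) h
  have hQYcof : llp (dTrivFib P D) (initial.to (cofRep U.N Y)) := by
    have h := (MP_eq_iff U.cof_eq _).mp (U.N.fact₁.mem_left (Arrow.mk (initial.to Y)))
    have e : initial.to (cofRep U.N Y) = U.N.fact₁.ι.app (Arrow.mk (initial.to Y)) :=
      initial.hom_ext _ _
    exact Eq.mpr (congrArg (fun f => llp (dTrivFib P D) f) e) h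
  -- Ken Brown's trick: factor `(Qη, 𝟙) : QX ⨿ QY ⟶ QY`.
  let φ : (cofRep U.N X ⨿ cofRep U.N Y) ⟶ cofRep U.N Y := coprod.desc Qη (𝟙 _)
  let q := U.N.fact₁.ι.app (Arrow.mk φ)
  let p := U.N.fact₁.π.app (Arrow.mk φ)
  have hfac : q ≫ p = φ := U.N.fact₁.fac (Arrow.mk φ)
  have hqcof : U.N.cof q := U.N.fact₁.mem_left (Arrow.mk φ)
  have hp := U.N.fact₁.mem_right (Arrow.mk φ)
  -- Both composites `inl ≫ q` and `inr ≫ q` are trivial `D`-cofibrations.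
  have hq' : llp (dTrivFib P D) q := (MP_eq_iff U.cof_eq _).mp hqcof
  have hcinl : U.N.cof (coprod.inl ≫ q) :=
    (MP_eq_iff U.cof_eq _).mpr (llp_comp (llp_coprod_inl _ _ hQYcof) hq')
  have hcinr : U.N.cof (coprod.inr ≫ q) :=
    (MP_eq_iff U.cof_eq _).mpr (llp_comp (llp_coprod_inr _ _ hQXcof) hq')
  have einl : (coprod.inl ≫ q) ≫ p = Qη := by
    erw [Category.assoc, hfac]; exact coprod.inl_desc _ _
  have einr : (coprod.inr ≫ q) ≫ p = 𝟙 _ := by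
    erw [Category.assoc, hfac]; exact coprod.inr_desc _ _
  have hwinl : U.N.weq (coprod.inl ≫ q) := by
    apply U.N.weq_cancel_right _ p hp.1
    rw [einl]; exact hQη
  have hwinr : U.N.weq (coprod.inr ≫ q) := by
    apply U.N.weq_cancel_right _ p hp.1
    rw [einr]; exact weq_id U.N _
  -- Trivial `D`-cofibrations are objectwise weak equivalences.
  have h3 : P.weq ((coprod.inl ≫ q).app c) := trivCof_app_weq P hcg U _ hwinl hcinl c
  have h4 : P.weq ((coprod.inr ≫ q).app c) := trivCof_app_weq P hcg U _ hwinr hcinr c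
  -- Hence `p` and `Qη` are objectwise weak equivalences at `c`.
  have hpc : P.weq (p.app c) := by
    apply P.weq_cancel_left ((coprod.inr ≫ q).app c) (p.app c) h4
    have e : (coprod.inr ≫ q).app c ≫ p.app c = 𝟙 _ := by
      rw [← NatTrans.comp_app, einr, NatTrans.id_app]
    rw [e]; exact weq_id P _
  have hQηc : P.weq (Qη.app c) := by
    have e : Qη.app c = (coprod.inl ≫ q).app c ≫ p.app c := by
      rw [← NatTrans.comp_app, einl]
    rw [e]; exact P.weq_comp _ _ h3 hpc
  -- Conclude by two-out-of-three in the naturality square.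
  apply P.weq_cancel_left ((cofRepHom U.N X).app c) (η.app c) (hX c)
  have hsq : Qη.app c ≫ (cofRepHom U.N Y).app c = (cofRepHom U.N X).app c ≫ η.app c := by
    rw [← NatTrans.comp_app, hnat, NatTrans.comp_app]
  rw [← hsq]
  exact P.weq_comp _ _ hQηc (hY c)
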